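/- Let (V, ν) and (Z, μ) be σ-finite measure spaces, let γ : V × Z → (0,∞) be measurable, and let q : Z × V → (0,∞) be a probability kernel density (∫ q(z,v') dν(v') = 1 for every z). Suppose ((v, z), w) is a random pair strictly properly weighted for γ, and conditionally on ((v,z), w), a new value v' is drawn with conditional law q(z,·)·ν. Define the updated weight w' := w · γ(v', z)·q(z, v) / (q(z, v')·γ(v, z)). Then ((v', z), w') is strictly properly weighted for γ. -/

import Mathlib

open MeasureTheory ProbabilityTheory ENNReal NNReal

/-- The Gibbs block-update of amortized population Gibbs sampling preserves strict
proper weighting: updating `v` to `v' ~ q(z,·)` and reweighting by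
`γ(v',z)·q(z,v) / (q(z,v')·γ(v,z))` yields a pair `((v',z), w')` that is strictly
properly weighted for `γ`. -/
theorem gibbs_update_strictly_properly_weighted
    {V Z α : Type*} [MeasurableSpace V] [MeasurableSpace Z] [MeasurableSpace α]
    (ν : Measure V) [SigmaFinite ν] (μ : Measure Z) [SigmaFinite μ]
    (P : Measure α) [IsProbabilityMeasure P]
    (γ : V × Z → ℝ≥0) (hγ : Measurable γ) (hγpos : ∀ p, 0 < γ p)
    (q : Z × V → ℝ≥0) (hq : Measurable q) (hqpos : ∀ p, 0 < q p)
    (hq1 : ∀ z, ∫⁻ v', (q (z, v') : ℝ≥0∞) ∂ν = 1)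
    (v : α → V) (z : α → Z) (w : α → ℝ≥0) (v' : α → V)
    (hv : Measurable v) (hz : Measurable z) (hw : Measurable w)
    (hv' : Measurable v')
    (hpw : ∀ h : V × Z → ℝ≥0∞, Measurable h →
      ∫⁻ a, (w a : ℝ≥0∞) * h (v a, z a) ∂P
        = ∫⁻ p, (γ p : ℝ≥0∞) * h p ∂(ν.prod μ))
    (hcond : ∀ g : (V × Z) × ℝ≥0 × V → ℝ≥0∞, Measurable g →
      ∫⁻ a, g ((v a, z a), w a, v' a) ∂P
        = ∫⁻ a, ∫⁻ y, (q (z a, y) : ℝ≥0∞) * g ((v a, z a), w a, y) ∂ν ∂P) :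
    ∀ h : V × Z → ℝ≥0∞, Measurable h →
      ∫⁻ a, ((w a * (γ (v' a, z a) * q (z a, v a)) /
          (q (z a, v' a) * γ (v a, z a)) : ℝ≥0) : ℝ≥0∞) * h (v' a, z a) ∂P
        = ∫⁻ p, (γ p : ℝ≥0∞) * h p ∂(ν.prod μ) := by
  intro h hh
  -- auxiliary: G z = ∫ γ(y,z) h(y,z) dν(y)
  set G : Z → ℝ≥0∞ := fun zz => ∫⁻ y, (γ (y, zz) : ℝ≥0∞) * h (y, zz) ∂ν with hG
  have hGmeas : Measurable G := by
    apply Measurable.lintegral_prod_right'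
      (f := fun p : Z × V => (γ (p.2, p.1) : ℝ≥0∞) * h (p.2, p.1))
    exact ((hγ.comp measurable_swap).coe_nnreal_ennreal).mul (hh.comp measurable_swap)
  -- the function fed to hcond
  set F : (V × Z) × ℝ≥0 × V → ℝ≥0∞ := fun p =>
    (p.2.1 : ℝ≥0∞) * (γ (p.2.2, p.1.2) : ℝ≥0∞) * (q (p.1.2, p.1.1) : ℝ≥0∞) *
      ((q (p.1.2, p.2.2) : ℝ≥0∞) * (γ (p.1.1, p.1.2) : ℝ≥0∞))⁻¹ * h (p.2.2, p.1.2) with hF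
  have hFmeas : Measurable F := by
    apply Measurable.mul
    apply Measurable.mul
    refine Measurable.mul (M := ℝ≥0∞) (f := fun p => _) (g := fun p => _) ?_ ?_
    refine Measurable.mul (M := ℝ≥0∞) (f := fun p => _) (g := fun p => _) ?_ ?_
    · exact measurable_snd.fst.coe_nnreal_ennreal
    · exact ((hγ.comp (measurable_snd.snd.prodMk measurable_fst.snd)).coe_nnreal_ennreal)
    · exact ((hq.comp (measurable_fst.snd.prodMk measurable_fst.fst)).coe_nnreal_ennreal)
    · exact (((hq.comp (measurable_fst.snd.prodMk measurable_snd.snd)).coe_nnreal_ennreal).mul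
        ((hγ.comp measurable_fst).coe_nnreal_ennreal)).inv
    · exact hh.comp (measurable_snd.snd.prodMk measurable_fst.snd)
  -- rewrite the integrand as F
  have hpt : ∀ a, ((w a * (γ (v' a, z a) * q (z a, v a)) /
        (q (z a, v' a) * γ (v a, z a)) : ℝ≥0) : ℝ≥0∞) * h (v' a, z a)
      = F ((v a, z a), w a, v' a) := by
    intro a
    have hden : (q (z a, v' a) * γ (v a, z a)) ≠ 0 :=
      mul_ne_zero (hqpos _).ne' (hγpos _).ne'
    rw [ENNReal.coe_div hden]
    simp only [hF, ENNReal.coe_mul, div_eq_mul_inv]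
    ring
  calc ∫⁻ a, ((w a * (γ (v' a, z a) * q (z a, v a)) /
          (q (z a, v' a) * γ (v a, z a)) : ℝ≥0) : ℝ≥0∞) * h (v' a, z a) ∂P
      = ∫⁻ a, F ((v a, z a), w a, v' a) ∂P := by
        exact lintegral_congr fun a => hpt a
    _ = ∫⁻ a, ∫⁻ y, (q (z a, y) : ℝ≥0∞) * F ((v a, z a), w a, y) ∂ν ∂P :=
        hcond F hFmeas
    _ = ∫⁻ a, (w a : ℝ≥0∞) * ((q (z a, v a) : ℝ≥0∞) * ((γ (v a, z a) : ℝ≥0∞))⁻¹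
          * G (z a)) ∂P := by
        refine lintegral_congr fun a => ?_
        have : ∀ y, (q (z a, y) : ℝ≥0∞) * F ((v a, z a), w a, y)
            = ((w a : ℝ≥0∞) * ((q (z a, v a) : ℝ≥0∞) * ((γ (v a, z a) : ℝ≥0∞))⁻¹))
              * ((γ (y, z a) : ℝ≥0∞) * h (y, z a)) := by
          intro y
          have hqy : (q (z a, y) : ℝ≥0∞) ≠ 0 := by
            exact_mod_cast (hqpos (z a, y)).ne'
          have hqyt : (q (z a, y) : ℝ≥0∞) ≠ ⊤ := ENNReal.coe_ne_top
          have hγa : (γ (v a, z a) : ℝ≥0∞) ≠ 0 := by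
            exact_mod_cast (hγpos (v a, z a)).ne'
          simp only [hF]
          rw [ENNReal.mul_inv (Or.inl hqy) (Or.inl hqyt)]
          have cancel : (q (z a, y) : ℝ≥0∞) * ((q (z a, y) : ℝ≥0∞))⁻¹ = 1 :=
            ENNReal.mul_inv_cancel hqy hqyt
          calc (q (z a, y) : ℝ≥0∞) * ((w a : ℝ≥0∞) * (γ (y, z a) : ℝ≥0∞)
                * (q (z a, v a) : ℝ≥0∞)
                * (((q (z a, y) : ℝ≥0∞))⁻¹ * ((γ (v a, z a) : ℝ≥0∞))⁻¹) * h (y, z a))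
              = ((q (z a, y) : ℝ≥0∞) * ((q (z a, y) : ℝ≥0∞))⁻¹)
                * ((w a : ℝ≥0∞) * ((q (z a, v a) : ℝ≥0∞) * ((γ (v a, z a) : ℝ≥0∞))⁻¹)
                  * ((γ (y, z a) : ℝ≥0∞) * h (y, z a))) := by ring
            _ = _ := by rw [cancel, one_mul]
        simp only [this]
        rw [lintegral_const_mul]
        · simp only [hG]; rw [mul_assoc]
        · exact ((hγ.comp (measurable_id.prodMk measurable_const)).coe_nnreal_ennreal).mul
            (hh.comp (measurable_id.prodMk measurable_const))
    _ = ∫⁻ p, (γ p : ℝ≥0∞) * ((q (p.2, p.1) : ℝ≥0∞) * ((γ p : ℝ≥0∞))⁻¹ * G p.2)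
          ∂(ν.prod μ) := by
        exact hpw (fun p => (q (p.2, p.1) : ℝ≥0∞) * ((γ p : ℝ≥0∞))⁻¹ * G p.2)
          (((((hq.comp (measurable_snd.prodMk measurable_fst)).coe_nnreal_ennreal).mul
            (hγ.coe_nnreal_ennreal.inv)).mul (hGmeas.comp measurable_snd)))
    _ = ∫⁻ p : V × Z, (q (p.2, p.1) : ℝ≥0∞) * G p.2 ∂(ν.prod μ) := by
        refine lintegral_congr fun p => ?_
        have h0 : (γ p : ℝ≥0∞) ≠ 0 := by exact_mod_cast (hγpos p).ne'
        have ht : (γ p : ℝ≥0∞) ≠ ⊤ := ENNReal.coe_ne_top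
        calc (γ p : ℝ≥0∞) * ((q (p.2, p.1) : ℝ≥0∞) * ((γ p : ℝ≥0∞))⁻¹ * G p.2)
            = ((γ p : ℝ≥0∞) * ((γ p : ℝ≥0∞))⁻¹) * ((q (p.2, p.1) : ℝ≥0∞) * G p.2) := by
              ring
          _ = _ := by rw [ENNReal.mul_inv_cancel h0 ht, one_mul]
    _ = ∫⁻ zz, ∫⁻ y, (q (zz, y) : ℝ≥0∞) * G zz ∂ν ∂μ := by
        refine lintegral_prod_symm _ ?_
        exact (((hq.comp (measurable_snd.prodMk measurable_fst)).coe_nnreal_ennreal).mul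
          (hGmeas.comp measurable_snd)).aemeasurable
    _ = ∫⁻ zz, G zz ∂μ := by
        refine lintegral_congr fun zz => ?_
        have hm : Measurable fun y : V => (q (zz, y) : ℝ≥0∞) :=
          (hq.comp measurable_prodMk_left).coe_nnreal_ennreal
        rw [lintegral_mul_const _ hm, hq1 zz, one_mul]
    _ = ∫⁻ p, (γ p : ℝ≥0∞) * h p ∂(ν.prod μ) := by
        rw [lintegral_prod_symm (fun p => (γ p : ℝ≥0∞) * h p) ((hγ.coe_nnreal_ennreal.mul hh).aemeasurable)]
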